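/- There exist finite sets X, Y, Z, a probability distribution P on X×Y×Z, and a classical channel R from Y to Y×Z with marginal channel R_{Y→Y}(y'|y) = Σ_{z'} R(y',z'|y), such that D( P ‖ (id⊗R)(P_XY) ) < I(X:Z|Y)_P − D_max( P_XY ‖ (id⊗R_{Y→Y})(P_XY) ). Consequently, the main lower bound fails if the term Λ_max(P_XY‖R_{Y→Y}) is replaced by the max-relative entropy between P_XY and its image under the marginal recovery channel. -/
import Mathlib


noncomputable section

namespace CIT

/-- A probability distribution on a finite set. -/
def IsDist {X : Type*} [Fintype X] (p : X → ℝ) : Prop :=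
  (∀ x, 0 ≤ p x) ∧ ∑ x, p x = 1

/-- Support inclusion `supp p ⊆ supp q`. -/
def suppLe {X : Type*} (p q : X → ℝ) : Prop := ∀ x, p x ≠ 0 → q x ≠ 0

open Classical in
/-- Relative entropy (base 2), with `0·log 0 = 0`, `+∞` if the support
condition fails. -/
def relEnt {X : Type*} [Fintype X] (p q : X → ℝ) : EReal :=
  if suppLe p q then ((∑ x, p x * Real.logb 2 (p x / q x) : ℝ) : EReal) else ⊤

open Classical in
/-- Max-relative entropy `D_max(p‖q) = log max_{x ∈ supp p} p(x)/q(x)`,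
`+∞` if the support condition fails. -/
def dMax {X : Type*} [Fintype X] (p q : X → ℝ) : EReal :=
  if suppLe p q then
    ((Real.logb 2 (sSup {r : ℝ | ∃ x, p x ≠ 0 ∧ r = p x / q x}) : ℝ) : EReal)
  else ⊤

open Classical in
/-- Rényi relative entropy of order `α` (base 2), with `D_1 := D` and `+∞`
when `α > 1` and the support condition fails. -/
def renyi {X : Type*} [Fintype X] (α : ℝ) (p q : X → ℝ) : EReal :=
  if α = 1 then relEnt p q
  else if 1 < α ∧ ¬ suppLe p q then ⊤
  else (((α - 1)⁻¹ * Real.logb 2 (∑ x, p x ^ α * q x ^ (1 - α)) : ℝ) : EReal)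

/-- The `XY`-marginal of a tripartite distribution. -/
def margXY {X Y Z : Type*} [Fintype Z] (P : X × Y × Z → ℝ) : X × Y → ℝ :=
  fun t => ∑ z, P (t.1, t.2, z)

/-- The `YZ`-marginal of a tripartite distribution. -/
def margYZ {X Y Z : Type*} [Fintype X] (P : X × Y × Z → ℝ) : Y × Z → ℝ :=
  fun t => ∑ x, P (x, t.1, t.2)

/-- The `Y`-marginal of a tripartite distribution. -/
def margY {X Y Z : Type*} [Fintype X] [Fintype Z] (P : X × Y × Z → ℝ) : Y → ℝ :=
  fun y => ∑ x, ∑ z, P (x, y, z)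

/-- Conditional mutual information
`I(X:Z|Y)_P = Σ P(x,y,z) log( P(x,y,z)·P_Y(y) / (P_XY(x,y)·P_YZ(y,z)) )`. -/
def cmi {X Y Z : Type*} [Fintype X] [Fintype Y] [Fintype Z] (P : X × Y × Z → ℝ) : ℝ :=
  ∑ s : X × Y × Z,
    P s * Real.logb 2 (P s * margY P s.2.1 / (margXY P (s.1, s.2.1) * margYZ P (s.2.1, s.2.2)))

/-- A classical channel from `Y` to `W`: a family of conditional distributions. -/
def IsChannel {Y W : Type*} [Fintype W] (R : Y → W → ℝ) : Prop :=
  ∀ y, (∀ w, 0 ≤ R y w) ∧ ∑ w, R y w = 1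

/-- Action `(id ⊗ R)` of a channel `R : Y → W` on a joint distribution on `X × Y`. -/
def applyChan {X Y W : Type*} [Fintype Y] (R : Y → W → ℝ) (P : X × Y → ℝ) : X × W → ℝ :=
  fun t => ∑ y, P (t.1, y) * R y t.2

/-- Action of a channel `R : Y → W` on a distribution on `Y`. -/
def chanOnDist {Y W : Type*} [Fintype Y] (R : Y → W → ℝ) (q : Y → ℝ) : W → ℝ :=
  fun w => ∑ y, q y * R y w

/-- Marginal channel `R_{Y→Y}(y'|y) = Σ_{z'} R(y',z'|y)`. -/
def margChan {Y Y' Z' : Type*} [Fintype Z'] (R : Y → Y' × Z' → ℝ) : Y → Y' → ℝ :=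
  fun y y' => ∑ z', R y (y', z')

end CIT

namespace CITProof
open CIT

/-- The distribution: `P(0,0,0)=P(1,1,0)=3/8`, `P(0,1,1)=P(1,0,1)=1/8`. -/
def Pv : Fin 2 → Fin 2 → Fin 2 → ℝ :=
  ![![![3/8, 0], ![0, 1/8]], ![![0, 1/8], ![3/8, 0]]]

def Pd : Fin 2 × Fin 2 × Fin 2 → ℝ := fun s => Pv s.1 s.2.1 s.2.2

/-- The channel: `R(0,0|0)=5/6`, `R(1,1|0)=1/6`, `R(1,0|1)=5/6`, `R(0,1|1)=1/6`. -/
def Rv : Fin 2 → Fin 2 → Fin 2 → ℝ :=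
  ![![![5/6, 0], ![0, 1/6]], ![![0, 1/6], ![5/6, 0]]]

def Rd : Fin 2 → Fin 2 × Fin 2 → ℝ := fun y w => Rv y w.1 w.2

lemma hPdist : IsDist Pd := by
  constructor
  · rintro ⟨x, y, z⟩
    fin_cases x <;> fin_cases y <;> fin_cases z <;> norm_num [Pd, Pv]
  · simp [Fintype.sum_prod_type, Fin.sum_univ_two, Pd, Pv]
    norm_num

lemma hRchan : IsChannel Rd := by
  intro y
  constructor
  · rintro ⟨w1, w2⟩
    fin_cases y <;> fin_cases w1 <;> fin_cases w2 <;> norm_num [Rd, Rv]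
  · fin_cases y <;>
      · simp [Fintype.sum_prod_type, Fin.sum_univ_two, Rd, Rv]
        norm_num

lemma hmargXY : ∀ x y : Fin 2, margXY Pd (x, y) = ![![3/8, 1/8], ![1/8, 3/8]] x y := by
  intro x y
  fin_cases x <;> fin_cases y <;>
    simp [margXY, Fin.sum_univ_two, Pd, Pv] <;> norm_num

lemma hmargYZ : ∀ y z : Fin 2, margYZ Pd (y, z) = ![![3/8, 1/8], ![3/8, 1/8]] y z := by
  intro y z
  fin_cases y <;> fin_cases z <;>
    simp [margYZ, Fin.sum_univ_two, Pd, Pv] <;> norm_num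

lemma hmargY : ∀ y : Fin 2, margY Pd y = 1/2 := by
  intro y
  fin_cases y <;>
    · simp [margY, Fin.sum_univ_two, Pd, Pv]
      norm_num

lemma hQ : ∀ x w1 w2 : Fin 2,
    applyChan Rd (margXY Pd) (x, (w1, w2)) =
      ![![![5/16, 1/48], ![5/48, 1/16]], ![![5/48, 1/16], ![5/16, 1/48]]] x w1 w2 := by
  intro x w1 w2
  fin_cases x <;> fin_cases w1 <;> fin_cases w2 <;>
    · simp [applyChan, Fin.sum_univ_two, hmargXY, Rd, Rv]
      try norm_num

lemma hmargChan : ∀ y y' : Fin 2, margChan Rd y y' = ![![5/6, 1/6], ![1/6, 5/6]] y y' := by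
  intro y y'
  fin_cases y <;> fin_cases y' <;>
    · simp [margChan, Fin.sum_univ_two, Rd, Rv]
      try norm_num

lemma hQ2 : ∀ x y' : Fin 2,
    applyChan (margChan Rd) (margXY Pd) (x, y') = ![![1/3, 1/6], ![1/6, 1/3]] x y' := by
  intro x y'
  fin_cases x <;> fin_cases y' <;>
    · simp [applyChan, Fin.sum_univ_two, hmargXY, hmargChan]
      try norm_num

lemma hrelEnt : relEnt Pd (applyChan Rd (margXY Pd)) =
    (((3/4) * Real.logb 2 (6/5) + 1/4 : ℝ) : EReal) := by
  rw [relEnt, if_pos]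
  · congr 1
    simp only [Fintype.sum_prod_type, Fin.sum_univ_two, hQ]
    norm_num [Pd, Pv]
    ring
  · rintro ⟨x, w1, w2⟩ _
    fin_cases x <;> fin_cases w1 <;> fin_cases w2 <;> rw [hQ] <;> norm_num

lemma hcmi : cmi Pd = 2 - (3/4) * Real.logb 2 3 := by
  rw [cmi]
  simp only [Fintype.sum_prod_type, Fin.sum_univ_two, hmargXY, hmargYZ, hmargY]
  norm_num [Pd, Pv]
  have h43 : Real.logb 2 (4/3 : ℝ) = 2 - Real.logb 2 3 := by
    rw [show (4:ℝ)/3 = 2^2 / 3 by norm_num, Real.logb_div (by norm_num) (by norm_num),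
      Real.logb_pow, Real.logb_self_eq_one (by norm_num)]
    push_cast; ring
  have h4 : Real.logb 2 (4 : ℝ) = 2 := by
    rw [show (4:ℝ) = 2^2 by norm_num, Real.logb_pow, Real.logb_self_eq_one (by norm_num)]
    push_cast; ring
  rw [h43, h4]; ring

lemma hdMax : dMax (margXY Pd) (applyChan (margChan Rd) (margXY Pd)) =
    ((Real.logb 2 (9/8) : ℝ) : EReal) := by
  rw [dMax, if_pos]
  · have hset : {r : ℝ | ∃ x, margXY Pd x ≠ 0 ∧
        r = margXY Pd x / applyChan (margChan Rd) (margXY Pd) x} = {9/8, 3/4} := by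
      ext r
      simp only [Set.mem_setOf_eq, Set.mem_insert_iff, Set.mem_singleton_iff]
      constructor
      · rintro ⟨⟨x, y⟩, hx, rfl⟩
        fin_cases x <;> fin_cases y <;> rw [hmargXY, hQ2] <;> norm_num
      · rintro (rfl | rfl)
        · exact ⟨(0, 0), by rw [hmargXY]; norm_num, by rw [hmargXY, hQ2]; norm_num⟩
        · exact ⟨(0, 1), by rw [hmargXY]; norm_num, by rw [hmargXY, hQ2]; norm_num⟩
    rw [hset, csSup_pair]
    norm_num [sup_eq_left.mpr]
  · rintro ⟨x, y⟩ _
    fin_cases x <;> fin_cases y <;> rw [hQ2] <;> norm_num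

lemma key_log : (14 : ℝ) * Real.log 3 < 16 * Real.log 2 + 3 * Real.log 5 := by
  have h : Real.log ((3:ℝ) ^ 14) < Real.log ((2:ℝ) ^ 16 * (5:ℝ) ^ 3) :=
    Real.log_lt_log (by positivity) (by norm_num)
  rw [Real.log_pow, Real.log_mul (by positivity) (by positivity),
    Real.log_pow, Real.log_pow] at h
  push_cast at h
  linarith

lemma main_real : (3/4 : ℝ) * Real.logb 2 (6/5) + 1/4 <
    (2 - (3/4) * Real.logb 2 3) - Real.logb 2 (9/8) := by
  have hl2 : (0:ℝ) < Real.log 2 := Real.log_pos (by norm_num)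
  have h65 : Real.logb 2 (6/5 : ℝ) = 1 + Real.logb 2 3 - Real.logb 2 5 := by
    rw [show (6:ℝ)/5 = 2 * 3 / 5 by norm_num, Real.logb_div (by norm_num) (by norm_num),
      Real.logb_mul (by norm_num) (by norm_num), Real.logb_self_eq_one (by norm_num)]
  have h98 : Real.logb 2 (9/8 : ℝ) = 2 * Real.logb 2 3 - 3 := by
    rw [show (9:ℝ)/8 = 3^2 / 2^3 by norm_num, Real.logb_div (by norm_num) (by norm_num),
      Real.logb_pow, Real.logb_pow, Real.logb_self_eq_one (by norm_num)]
    push_cast; ring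
  have hkey : 14 * Real.logb 2 3 - 3 * Real.logb 2 5 < 16 := by
    rw [Real.logb, Real.logb]
    rw [show (14:ℝ) * (Real.log 3 / Real.log 2) - 3 * (Real.log 5 / Real.log 2)
        = (14 * Real.log 3 - 3 * Real.log 5) / Real.log 2 by ring]
    rw [div_lt_iff₀ hl2]
    linarith [key_log]
  rw [h65, h98]
  linarith

end CITProof

open CIT in
/-- there is a tripartite distribution `P` and a channel `R`
from `Y` to `Y×Z` such that
`D(P ‖ (id⊗R)(P_XY)) < I(X:Z|Y)_P − D_max(P_XY ‖ (id⊗R_{Y→Y})(P_XY))`. -/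
theorem modified_lambda_term_fails :
    ∃ (nx ny nz : ℕ) (P : Fin nx × Fin ny × Fin nz → ℝ)
      (R : Fin ny → Fin ny × Fin nz → ℝ),
      IsDist P ∧ IsChannel R ∧
        relEnt P (applyChan R (margXY P)) <
          ((cmi P : ℝ) : EReal) - dMax (margXY P) (applyChan (margChan R) (margXY P)) := by
  refine ⟨2, 2, 2, CITProof.Pd, CITProof.Rd, CITProof.hPdist, CITProof.hRchan, ?_⟩
  rw [CITProof.hrelEnt, CITProof.hcmi, CITProof.hdMax, ← EReal.coe_sub]
  exact_mod_cast CITProof.main_real
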